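/- Let N = 2m with m odd, p an odd prime coprime to N, and f the multiplicative order of p modulo N. If there exists an integer j with p^j ≡ 2 (mod m), then for every integer t coprime to N, Σ_{i=0}^{f-1} [t p^i]_N = fN/2. -/

import Mathlib

private lemma shiftOne (G : ℕ → ℤ) (f : ℕ) (h : G f = G 0) :
    ∑ i ∈ Finset.range f, G (i + 1) = ∑ i ∈ Finset.range f, G i := by
  have h1 := Finset.sum_range_succ' G f
  have h2 := Finset.sum_range_succ G f
  linarith

private lemma shiftSum (F : ℕ → ℤ) (f : ℕ) (hF : ∀ i, F (i + f) = F i) (j : ℕ) :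
    ∑ i ∈ Finset.range f, F (i + j) = ∑ i ∈ Finset.range f, F i := by
  induction j with
  | zero => simp
  | succ j ih =>
    have key := shiftOne (fun i => F (i + j)) f (by
      show F (f + j) = F (0 + j)
      rw [show f + j = j + f by omega, hF j, Nat.zero_add])
    calc ∑ i ∈ Finset.range f, F (i + (j + 1))
        = ∑ i ∈ Finset.range f, F ((i + 1) + j) :=
          Finset.sum_congr rfl fun i _ => by congr 1; omega
      _ = ∑ i ∈ Finset.range f, F (i + j) := key
      _ = _ := ih

/-- If `N = 2m` with `m` odd and `2 ∈ ⟨p⟩ (mod m)`, then the Gauss sum `G_{p^f}(η_N)` is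
pure (Stickelberger criterion). -/
theorem stmt_8 (p m : ℕ) (hp : p.Prime) (hp2 : p ≠ 2) (hm : Odd m)
    (hcop : Nat.Coprime (2 * m) p)
    (f : ℕ) (hf : f = orderOf ((p : ZMod (2 * m))))
    (j : ℕ) (hj : ((p : ZMod m)) ^ j = 2) :
    ∀ t : ℤ, Int.gcd t (2 * m) = 1 →
      2 * ∑ i ∈ Finset.range f, (t * (p : ℤ) ^ i) % (2 * m) = (f : ℤ) * (2 * m) := by
  intro t ht
  set M : ℤ := (m : ℤ) with hM
  have hmodd : m % 2 = 1 := Nat.odd_iff.mp hm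
  have hM1 : 1 ≤ M := by omega
  have hModd : M % 2 = 1 := by omega
  have hMne : M ≠ 0 := by omega
  -- p^f ≡ 1 mod 2m
  have hpf : ((p : ℤ)) ^ f ≡ 1 [ZMOD ((2 * m : ℕ) : ℤ)] := by
    have h1 : ((p : ZMod (2 * m))) ^ f = 1 := by rw [hf]; exact pow_orderOf_eq_one _
    have h2 : (((p : ℤ) ^ f : ℤ) : ZMod (2 * m)) = ((1 : ℤ) : ZMod (2 * m)) := by
      push_cast
      exact_mod_cast h1
    exact (ZMod.intCast_eq_intCast_iff _ _ _).mp h2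
  have hpfm : ((p : ℤ)) ^ f ≡ 1 [ZMOD M] := by
    refine Int.ModEq.of_dvd ?_ hpf
    push_cast
    exact ⟨2, by ring⟩
  -- p^j ≡ 2 mod m
  have hpj : ((p : ℤ)) ^ j ≡ 2 [ZMOD M] := by
    have h2 : (((p : ℤ) ^ j : ℤ) : ZMod m) = ((2 : ℤ) : ZMod m) := by
      push_cast
      exact_mod_cast hj
    exact (ZMod.intCast_eq_intCast_iff _ _ _).mp h2
  -- t * p^i is odd
  have hodd : ∀ i : ℕ, (t * (p : ℤ) ^ i) % 2 = 1 := by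
    intro i
    rcases Int.emod_two_eq (t * (p : ℤ) ^ i) with h | h
    · exfalso
      have h2 : (2 : ℤ) ∣ t * (p : ℤ) ^ i := Int.dvd_of_emod_eq_zero h
      rcases (Int.prime_two.dvd_mul).mp h2 with h3 | h3
      · have h4 : (2 : ℤ) ∣ ((2 * m : ℕ) : ℤ) := by push_cast; exact ⟨M, by ring⟩
        have h5 : (2 : ℤ) ∣ ((Int.gcd t ((2 * m : ℕ) : ℤ) : ℕ) : ℤ) := Int.dvd_coe_gcd h3 h4
        have ht' : Int.gcd t (((2 * m : ℕ) : ℤ)) = 1 := by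
          have : (((2 * m : ℕ) : ℤ)) = 2 * M := by push_cast; ring
          rw [this]; exact_mod_cast ht
        rw [ht'] at h5
        norm_num at h5
      · have h4 : (2 : ℕ) ∣ p ^ i := by exact_mod_cast h3
        have h5 : (2 : ℕ) ∣ p := Nat.Prime.dvd_of_dvd_pow Nat.prime_two h4
        exact hp2 ((Nat.prime_dvd_prime_iff_eq Nat.prime_two hp).mp h5).symm
    · exact h
  -- the residues mod m
  set r : ℕ → ℤ := fun i => (t * (p : ℤ) ^ i) % M with hr
  have hrb : ∀ i, 0 ≤ r i ∧ r i < M :=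
    fun i => ⟨Int.emod_nonneg _ hMne, Int.emod_lt_of_pos _ (by omega)⟩
  -- key invariance: summing g over doubled residues = summing g over residues
  have key : ∀ g : ℤ → ℤ,
      ∑ i ∈ Finset.range f, g ((2 * r i) % M) = ∑ i ∈ Finset.range f, g (r i) := by
    intro g
    have hF : ∀ i, (fun i => g ((t * (p : ℤ) ^ i) % M)) (i + f)
        = (fun i => g ((t * (p : ℤ) ^ i) % M)) i := by
      intro i
      simp only []
      congr 1
      have : t * (p : ℤ) ^ (i + f) ≡ t * (p : ℤ) ^ i * 1 [ZMOD M] := by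
        rw [pow_add, ← mul_assoc]
        exact Int.ModEq.mul_left _ hpfm
      simpa [Int.ModEq] using this
    have h1 := shiftSum (fun i => g ((t * (p : ℤ) ^ i) % M)) f hF j
    have h2 : ∀ i : ℕ, (t * (p : ℤ) ^ (i + j)) % M = (2 * r i) % M := by
      intro i
      have e1 : t * (p : ℤ) ^ (i + j) ≡ t * (p : ℤ) ^ i * 2 [ZMOD M] := by
        rw [pow_add, ← mul_assoc]
        exact Int.ModEq.mul_left _ hpj
      have e2 : t * (p : ℤ) ^ i * 2 ≡ r i * 2 [ZMOD M] :=
        Int.ModEq.mul_right 2 (Int.emod_emod_of_dvd _ dvd_rfl).symm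
      have := e1.trans e2
      calc (t * (p : ℤ) ^ (i + j)) % M = (r i * 2) % M := this
        _ = (2 * r i) % M := by ring_nf
    calc ∑ i ∈ Finset.range f, g ((2 * r i) % M)
        = ∑ i ∈ Finset.range f, (fun i => g ((t * (p : ℤ) ^ i) % M)) (i + j) := by
          refine Finset.sum_congr rfl fun i _ => ?_
          simp only []
          rw [h2 i]
      _ = ∑ i ∈ Finset.range f, g (r i) := h1
  -- indicator
  set χ : ℕ → ℤ := fun i => if M ≤ 2 * r i then 1 else 0 with hχ
  have hA : ∀ i, (2 * r i) % M = 2 * r i - M * χ i := by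
    intro i
    obtain ⟨h0, h1⟩ := hrb i
    simp only [hχ]
    split_ifs with h
    · rw [show 2 * r i = (2 * r i - M) + 1 * M by ring, Int.add_mul_emod_self_right]
      rw [Int.emod_eq_of_lt (by omega) (by omega)]
      ring
    · rw [Int.emod_eq_of_lt (by omega) (by omega)]; ring
  have hB : ∀ i, ((2 * r i) % M) % 2 = χ i := by
    intro i
    obtain ⟨h0, h1⟩ := hrb i
    rw [hA i]
    simp only [hχ]
    split_ifs with h
    · omega
    · omega
  -- apply key with g = id and g = (· % 2)
  have key1 := key id
  have key2 := key (fun x => x % 2)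
  simp only [id] at key1
  have e1 : ∑ i ∈ Finset.range f, r i = M * ∑ i ∈ Finset.range f, χ i := by
    have : ∑ i ∈ Finset.range f, (2 * r i - M * χ i) = ∑ i ∈ Finset.range f, r i := by
      rw [← key1]
      exact Finset.sum_congr rfl fun i _ => (hA i).symm
    rw [Finset.sum_sub_distrib, ← Finset.mul_sum, ← Finset.mul_sum] at this
    linarith
  have e2 : ∑ i ∈ Finset.range f, χ i = ∑ i ∈ Finset.range f, (r i % 2) := by
    calc ∑ i ∈ Finset.range f, χ i
        = ∑ i ∈ Finset.range f, ((2 * r i) % M) % 2 :=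
          Finset.sum_congr rfl fun i _ => (hB i).symm
      _ = ∑ i ∈ Finset.range f, (r i % 2) := key2
  -- the residues mod 2m
  have ha : ∀ i, (t * (p : ℤ) ^ i) % (2 * M) = r i + M * (1 - r i % 2) := by
    intro i
    set a : ℤ := (t * (p : ℤ) ^ i) % (2 * M) with haa
    have haM : a % M = r i := Int.emod_emod_of_dvd _ ⟨2, by ring⟩
    have hab : 0 ≤ a ∧ a < 2 * M :=
      ⟨Int.emod_nonneg _ (by omega), Int.emod_lt_of_pos _ (by omega)⟩
    have ha2 : a % 2 = 1 := by
      have : a % 2 = (t * (p : ℤ) ^ i) % 2 := Int.emod_emod_of_dvd _ ⟨M, by ring⟩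
      rw [this]; exact hodd i
    have hdiv := Int.emod_add_mul_ediv a M
    set k : ℤ := a / M with hk
    have hk01 : k = 0 ∨ k = 1 := by
      obtain ⟨h0, h1⟩ := hrb i
      rcases lt_trichotomy k 0 with h | h | h
      · exfalso; nlinarith [haM, hdiv, hab.1]
      · left; exact h
      · right
        by_contra hne
        have h2 : 2 ≤ k := by omega
        nlinarith [haM, hdiv, hab.2]
    obtain ⟨h0, h1⟩ := hrb i
    rcases hk01 with h | h
    · have hae : a = r i := by
        have h3 := hdiv
        rw [haM, h, mul_zero, add_zero] at h3
        exact h3.symm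
      have : r i % 2 = 1 := by rw [← hae]; exact ha2
      rw [hae, this]; ring
    · have hae : a = r i + M := by
        have h3 := hdiv
        rw [haM, h, mul_one] at h3
        exact h3.symm
      have h2' : (r i + M) % 2 = 1 := by rw [← hae]; exact ha2
      have : r i % 2 = 0 := by omega
      rw [hae, this]; ring
  -- conclude
  have hsum : ∑ i ∈ Finset.range f, (t * (p : ℤ) ^ i) % (2 * M)
      = ∑ i ∈ Finset.range f, (r i + M * (1 - r i % 2)) :=
    Finset.sum_congr rfl fun i _ => ha i
  have hsplit : ∑ i ∈ Finset.range f, (r i + M * (1 - r i % 2))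
      = ∑ i ∈ Finset.range f, r i
        + M * ((f : ℤ) - ∑ i ∈ Finset.range f, (r i % 2)) := by
    rw [Finset.sum_add_distrib, ← Finset.mul_sum, Finset.sum_sub_distrib]
    simp [Finset.sum_const, Finset.card_range]
  have : ∑ i ∈ Finset.range f, (t * (p : ℤ) ^ i) % (2 * M) = M * (f : ℤ) := by
    rw [hsum, hsplit, e1, e2]; ring
  push_cast
  rw [this]
  ring
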